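/- Let Ω : [0,T] → ℝ³ be continuous, R : [0,T] → SO(3) be differentiable with Ṙ(t) = R(t) Ω̂(t), and η : [0,T] → ℝ³ be differentiable. Define the varied curve R^ε(t) = R(t) · exp(ε η̂(t)). Then for each t ∈ [0,T], the infinitesimal variation of Rᵀ Ṙ satisfies (∂/∂ε)|_{ε=0} [ (R^ε(t))ᵀ (∂/∂t) R^ε(t) ] = ( η̇(t) + Ω(t) × η(t) )^. -/

import Mathlib

open scoped NNReal


open Matrix

attribute [local instance] Matrix.normedAddCommGroup Matrix.normedSpace

/-- The hat map `^ : ℝ³ → 𝔰𝔬(3)`. -/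
def hat (x : Fin 3 → ℝ) : Matrix (Fin 3) (Fin 3) ℝ :=
  !![0, -x 2, x 1; x 2, 0, -x 0; -x 1, x 0, 0]

noncomputable section Aux

local notation "M3" => Matrix (Fin 3) (Fin 3) ℝ

lemma hat_add (x y : Fin 3 → ℝ) : hat (x + y) = hat x + hat y := by
  ext i j; fin_cases i <;> fin_cases j <;> simp [hat] <;> ring

lemma hat_smul (c : ℝ) (x : Fin 3 → ℝ) : hat (c • x) = c • hat x := by
  ext i j; fin_cases i <;> fin_cases j <;> simp [hat] <;> ring

lemma hat_transpose (x : Fin 3 → ℝ) : (hat x)ᵀ = -hat x := by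
  ext i j; fin_cases i <;> fin_cases j <;> simp [hat]

lemma hat_comm (a b : Fin 3 → ℝ) : hat a * hat b - hat b * hat a = hat (a ⨯₃ b) := by
  ext i j; fin_cases i <;> fin_cases j <;>
    simp [hat, crossProduct, Matrix.mul_apply, Fin.sum_univ_three] <;> ring

lemma pi_norm_le_sum (A : M3) : ‖A‖ ≤ ∑ i, ∑ j, ‖A i j‖ := by
  refine (Matrix.norm_le_iff (by positivity)).2 fun i j => ?_
  calc ‖A i j‖ ≤ ∑ j', ‖A i j'‖ :=
        Finset.single_le_sum (fun _ _ => norm_nonneg _) (Finset.mem_univ j)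
    _ ≤ ∑ i', ∑ j', ‖A i' j'‖ :=
        Finset.single_le_sum (f := fun i' => ∑ j', ‖A i' j'‖)
          (fun _ _ => Finset.sum_nonneg fun _ _ => norm_nonneg _) (Finset.mem_univ i)

lemma sum_le_pi_norm (A : M3) : (∑ i, ∑ j, ‖A i j‖) ≤ 9 * ‖A‖ := by
  calc (∑ i, ∑ j, ‖A i j‖) ≤ ∑ _i : Fin 3, ∑ _j : Fin 3, ‖A‖ :=
        Finset.sum_le_sum fun i _ => Finset.sum_le_sum fun j _ =>
          A.norm_entry_le_entrywise_sup_norm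
    _ = 9 * ‖A‖ := by simp; ring

lemma pi_norm_nonneg' (A : M3) : 0 ≤ ‖A‖ := norm_nonneg A

/-- `HasDerivAt` with respect to the entrywise sup norm instances, packaged as a
definition so that it can be referred to unambiguously. -/
def PiHasDerivAt (f : ℝ → M3) (f' : M3) (x : ℝ) : Prop := HasDerivAt f f' x

lemma piHasDerivAt_iff (f : ℝ → M3) (f' : M3) (x : ℝ) :
    PiHasDerivAt f f' x ↔ Filter.Tendsto
      (fun y => ‖y - x‖⁻¹ * ‖f y - f x - (y - x) • f'‖) (nhds x) (nhds 0) :=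
  hasDerivAt_iff_tendsto

section Linfty

attribute [-instance] Matrix.normedAddCommGroup Matrix.normedSpace
attribute [local instance] Matrix.linftyOpNormedRing Matrix.linftyOpNormedAlgebra

lemma linfty_norm_le_sum (A : M3) : ‖A‖ ≤ ∑ i, ∑ j, ‖A i j‖ := by
  rw [Matrix.linfty_opNorm_def]
  have h : (Finset.univ.sup fun i => ∑ j, ‖A i j‖₊) ≤ ∑ i : Fin 3, ∑ j : Fin 3, ‖A i j‖₊ :=
    Finset.sup_le fun i _ => Finset.single_le_sum (f := fun i => ∑ j, ‖A i j‖₊)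
      (fun _ _ => zero_le) (Finset.mem_univ i)
  calc ((Finset.univ.sup fun i => ∑ j, ‖A i j‖₊ : ℝ≥0) : ℝ)
      ≤ ((∑ i : Fin 3, ∑ j : Fin 3, ‖A i j‖₊ : ℝ≥0) : ℝ) := by exact_mod_cast h
    _ = ∑ i, ∑ j, ‖A i j‖ := by push_cast; rfl

lemma linfty_entry_le (A : M3) (i j : Fin 3) : ‖A i j‖ ≤ ‖A‖ := by
  have h : ‖A i j‖₊ ≤ ‖A‖₊ := by
    rw [Matrix.linfty_opNNNorm_def]
    exact le_trans
      (Finset.single_le_sum (f := fun j => ‖A i j‖₊) (fun _ _ => zero_le) (Finset.mem_univ j))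
      (Finset.le_sup (f := fun i => ∑ j, ‖A i j‖₊) (Finset.mem_univ i))
  exact_mod_cast h

lemma sum_le_linfty_norm (A : M3) : (∑ i, ∑ j, ‖A i j‖) ≤ 9 * ‖A‖ := by
  calc (∑ i, ∑ j, ‖A i j‖) ≤ ∑ _i : Fin 3, ∑ _j : Fin 3, ‖A‖ :=
        Finset.sum_le_sum fun i _ => Finset.sum_le_sum fun j _ => linfty_entry_le A i j
    _ = 9 * ‖A‖ := by simp; ring

lemma lin_norm_nonneg' (A : M3) : 0 ≤ ‖A‖ := norm_nonneg A

lemma toPi {f : ℝ → M3} {f' : M3} {x : ℝ} (h : HasDerivAt f f' x) :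
    PiHasDerivAt f f' x := by
  replace h := hasDerivAt_iff_tendsto.mp h
  rw [piHasDerivAt_iff]
  have h9 := h.const_mul (9:ℝ)
  rw [mul_zero] at h9
  refine squeeze_zero (fun y => mul_nonneg (by positivity) (pi_norm_nonneg' _)) (fun y => ?_) h9
  have hb := (pi_norm_le_sum (f y - f x - (y - x) • f')).trans
    (sum_le_linfty_norm (f y - f x - (y - x) • f'))
  have hinv : (0:ℝ) ≤ ‖y - x‖⁻¹ := by positivity
  nlinarith [mul_le_mul_of_nonneg_left hb hinv]

lemma ofPi {f : ℝ → M3} {f' : M3} {x : ℝ}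
    (h : PiHasDerivAt f f' x) :
    HasDerivAt f f' x := by
  rw [piHasDerivAt_iff] at h
  refine hasDerivAt_iff_tendsto.mpr ?_
  have h9 := h.const_mul (9:ℝ)
  rw [mul_zero] at h9
  refine squeeze_zero (fun y => mul_nonneg (by positivity) (lin_norm_nonneg' _)) (fun y => ?_) h9
  have hb := (linfty_norm_le_sum (f y - f x - (y - x) • f')).trans
    (sum_le_pi_norm (f y - f x - (y - x) • f'))
  have hinv : (0:ℝ) ≤ ‖y - x‖⁻¹ := by positivity
  nlinarith [mul_le_mul_of_nonneg_left hb hinv]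

/-- The hat map as a continuous linear map. -/
def hatL : (Fin 3 → ℝ) →L[ℝ] M3 :=
  LinearMap.toContinuousLinearMap
    { toFun := hat
      map_add' := hat_add
      map_smul' := hat_smul }

lemma hat_hasDerivAt {η : ℝ → Fin 3 → ℝ} {η' : Fin 3 → ℝ} {t : ℝ}
    (hη : HasDerivAt η η' t) : HasDerivAt (fun s => hat (η s)) (hat η') t :=
  hatL.hasFDerivAt.comp_hasDerivAt t hη

/-- The candidate value of the derivative of `exp` along a ray, divided by `ε`. -/
def gg (A₀ A' : M3) (ε : ℝ) : M3 := (fderiv ℝ (NormedSpace.exp) (ε • A₀)) A'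

lemma gg_cont (A₀ A' : M3) : Continuous (gg A₀ A') := by
  have h1 : Continuous (fderiv ℝ (NormedSpace.exp : M3 → M3)) :=
    (contDiff_iff_contDiffAt.mpr fun x =>
      (NormedSpace.exp_analytic x).contDiffAt).continuous_fderiv one_ne_zero
  exact (h1.comp (continuous_id.smul continuous_const)).clm_apply continuous_const

lemma gg_zero (A₀ A' : M3) : gg A₀ A' 0 = A' := by
  rw [gg, zero_smul, show fderiv ℝ (NormedSpace.exp : M3 → M3) 0 = 1 from
    hasFDerivAt_exp_zero.fderiv, ContinuousLinearMap.one_apply]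

lemma exp_curve_hasDerivAt {η η' : ℝ → Fin 3 → ℝ} {t : ℝ}
    (hη : HasDerivAt η (η' t) t) (ε : ℝ) :
    HasDerivAt (fun s => NormedSpace.exp (ε • hat (η s)))
      (ε • gg (hat (η t)) (hat (η' t)) ε) t := by
  have h1 : HasDerivAt (fun s => ε • hat (η s)) (ε • hat (η' t)) t :=
    (hat_hasDerivAt hη).const_smul ε
  have h2 : DifferentiableAt ℝ (NormedSpace.exp : M3 → M3) (ε • hat (η t)) :=
    (NormedSpace.exp_analytic _).differentiableAt
  have h3 := h2.hasFDerivAt.comp_hasDerivAt t h1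
  exact h3.congr_deriv (by rw [gg]; exact map_smul _ _ _)

lemma smul_cont_hasDerivAt (q : ℝ → M3) (hq : ContinuousAt q 0) :
    HasDerivAt (fun ε => ε • q ε) (q 0) 0 := by
  refine hasDerivAt_iff_isLittleO.mpr ?_
  rw [Asymptotics.isLittleO_iff]
  intro c hc
  have hev : ∀ᶠ y in nhds (0:ℝ), ‖q y - q 0‖ ≤ c := by
    have := hq.tendsto
    replace this := Metric.tendsto_nhds.mp this
    filter_upwards [this c hc] with y hy
    rw [dist_eq_norm] at hy
    exact hy.le
  filter_upwards [hev] with y hy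
  have : y • q y - (0:ℝ) • q 0 - (y - 0) • q 0 = y • (q y - q 0) := by
    simp [smul_sub]
  rw [this]
  rw [norm_smul]
  simp only [sub_zero]
  calc ‖y‖ * ‖q y - q 0‖ ≤ ‖y‖ * c := by
        exact mul_le_mul_of_nonneg_left hy (norm_nonneg y)
    _ = c * ‖y‖ := mul_comm _ _

lemma F_hasDerivAt (A₀ A' C : M3) :
    HasDerivAt (fun ε : ℝ =>
        NormedSpace.exp (ε • (-A₀)) * (C * NormedSpace.exp (ε • A₀)) +
          ε • (NormedSpace.exp (ε • (-A₀)) * gg A₀ A' ε))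
      ((C * A₀ - A₀ * C) + A') 0 := by
  have e1 := hasDerivAt_exp_smul_const (𝕂 := ℝ) (-A₀) (0:ℝ)
  have e2 := hasDerivAt_exp_smul_const (𝕂 := ℝ) A₀ (0:ℝ)
  have h1 : HasDerivAt
      (fun ε : ℝ => NormedSpace.exp (ε • (-A₀)) * (C * NormedSpace.exp (ε • A₀)))
      (C * A₀ - A₀ * C) 0 := by
    have := e1.mul (e2.const_mul C)
    simp only [zero_smul, NormedSpace.exp_zero, one_mul, mul_one] at this
    exact this.congr_deriv (by noncomm_ring)
  have h2 : HasDerivAt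
      (fun ε : ℝ => ε • (NormedSpace.exp (ε • (-A₀)) * gg A₀ A' ε)) A' 0 := by
    have hq : ContinuousAt (fun ε : ℝ => NormedSpace.exp (ε • (-A₀)) * gg A₀ A' ε) 0 :=
      (((NormedSpace.exp_continuous (𝔸 := M3)).comp
        (continuous_id.smul continuous_const)).mul (gg_cont A₀ A')).continuousAt
    have := smul_cont_hasDerivAt _ hq
    simpa [gg_zero] using this
  exact h1.add h2

lemma varied_curve_hasDerivAt {Ω η η' : ℝ → Fin 3 → ℝ} {R : ℝ → M3} {t : ℝ}
    (hR : HasDerivAt R (R t * hat (Ω t)) t) (hη : HasDerivAt η (η' t) t) (ε : ℝ) :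
    HasDerivAt (fun s => R s * NormedSpace.exp (ε • hat (η s)))
      (R t * hat (Ω t) * NormedSpace.exp (ε • hat (η t)) +
        ε • (R t * gg (hat (η t)) (hat (η' t)) ε)) t := by
  have := hR.mul (exp_curve_hasDerivAt hη ε)
  simp [mul_smul_comm] at this; exact this

end Linfty

end Aux


/-- Let `R : [0,T] → SO(3)` satisfy `Ṙ = R Ω̂` with `Ω` continuous, let `η` be
differentiable, and consider the varied curve `R^ε(t) = R(t) exp(ε η̂(t))`, whose
time derivative at each `(ε, t)` is `D ε t`.  Then the infinitesimal variation of
`Rᵀ Ṙ` satisfies `(∂/∂ε)|₀ [(R^ε(t))ᵀ ∂ₜ R^ε(t)] = (η̇(t) + Ω(t) × η(t))^`. -/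
theorem variation_of_body_angular_velocity (T : ℝ) (hT : 0 ≤ T)
    (Ω : ℝ → Fin 3 → ℝ) (R : ℝ → Matrix (Fin 3) (Fin 3) ℝ)
    (η η' : ℝ → Fin 3 → ℝ)
    (hΩ : ContinuousOn Ω (Set.Icc 0 T))
    (hSO : ∀ t ∈ Set.Icc 0 T, (R t)ᵀ * R t = 1 ∧ (R t).det = 1)
    (hR : ∀ t ∈ Set.Icc 0 T, HasDerivAt R (R t * hat (Ω t)) t)
    (hη : ∀ t ∈ Set.Icc 0 T, HasDerivAt η (η' t) t)
    (D : ℝ → ℝ → Matrix (Fin 3) (Fin 3) ℝ)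
    (hD : ∀ (ε : ℝ), ∀ t ∈ Set.Icc 0 T,
      HasDerivAt (fun s => R s * NormedSpace.exp (ε • hat (η s))) (D ε t) t)
    (t : ℝ) (ht : t ∈ Set.Icc 0 T) :
    HasDerivAt (fun ε : ℝ => (R t * NormedSpace.exp (ε • hat (η t)))ᵀ * D ε t)
      (hat (η' t + Ω t ⨯₃ η t)) 0 := by
  have h1 : (R t)ᵀ * R t = 1 := (hSO t ht).1
  have hcurve := fun ε : ℝ => varied_curve_hasDerivAt (ofPi (hR t ht)) (hη t ht) ε
  have hDval : ∀ ε : ℝ, D ε t =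
      R t * hat (Ω t) * NormedSpace.exp (ε • hat (η t)) +
        ε • (R t * gg (hat (η t)) (hat (η' t)) ε) :=
    fun ε => (hD ε t ht).unique (toPi (hcurve ε))
  have cancel : ∀ (ε : ℝ) (X : Matrix (Fin 3) (Fin 3) ℝ),
      NormedSpace.exp (ε • (-hat (η t))) * (R t)ᵀ * (R t * X) =
        NormedSpace.exp (ε • (-hat (η t))) * X := by
    intro ε X
    rw [Matrix.mul_assoc, ← Matrix.mul_assoc (R t)ᵀ, h1, Matrix.one_mul]
  have hfun : ∀ ε : ℝ, (R t * NormedSpace.exp (ε • hat (η t)))ᵀ * D ε t =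
      NormedSpace.exp (ε • (-hat (η t))) *
          (hat (Ω t) * NormedSpace.exp (ε • hat (η t))) +
        ε • (NormedSpace.exp (ε • (-hat (η t))) * gg (hat (η t)) (hat (η' t)) ε) := by
    intro ε
    have hexpT : (NormedSpace.exp (ε • hat (η t)))ᵀ =
        NormedSpace.exp (ε • (-hat (η t))) := by
      rw [← Matrix.exp_transpose, transpose_smul, hat_transpose]
    rw [hDval ε, transpose_mul, hexpT, mul_add,
      Matrix.mul_assoc (R t) (hat (Ω t)) (NormedSpace.exp (ε • hat (η t))),
      cancel, mul_smul_comm, cancel]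
  have hF : HasDerivAt
      (fun ε : ℝ => NormedSpace.exp (ε • (-hat (η t))) *
          (hat (Ω t) * NormedSpace.exp (ε • hat (η t))) +
        ε • (NormedSpace.exp (ε • (-hat (η t))) * gg (hat (η t)) (hat (η' t)) ε))
      ((hat (Ω t) * hat (η t) - hat (η t) * hat (Ω t)) + hat (η' t)) 0 :=
    toPi (F_hasDerivAt (hat (η t)) (hat (η' t)) (hat (Ω t)))
  have hval : hat (η' t + Ω t ⨯₃ η t) =
      (hat (Ω t) * hat (η t) - hat (η t) * hat (Ω t)) + hat (η' t) := by
    rw [hat_add, hat_comm]; exact add_comm _ _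
  rw [hval]
  exact hF.congr_of_eventuallyEq (Filter.Eventually.of_forall hfun)
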